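/- (Constructive method.) Suppose T is in case 1 (k < 0 and M < m). Then the exponential I_h(t) = a·e^{kt} + (b_m + b_M)/2 strictly improves the approximation given by the constant h: ‖T − I_h(𝔱)‖_∞ < ‖T − h(𝔱)‖_∞. -/
import Mathlib


/-- Constructive method: In case 1 (`k < 0` and `M < m`), the
exponential `I_h(t) = a·e^{kt} + (b_m + b_M)/2` strictly improves the
approximation given by the constant `h = (max T + min T)/2 = (T_M + T_m)/2`:
`‖T − I_h(𝔱)‖_∞ < ‖T − h(𝔱)‖_∞`.  The norm on `Fin n → ℝ` is the sup-norm. -/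
theorem case1_constructive_improves {n : ℕ}
    (t : Fin n → ℝ) (ht : StrictMono t) (T : Fin n → ℝ)
    (k : ℝ) (hk : k < 0)
    (m M : Fin n)
    (hm_min : ∀ i, T m ≤ T i) (hm_first : ∀ i, T i = T m → m ≤ i)
    (hM_max : ∀ i, T i ≤ T M) (hM_last : ∀ i, T i = T M → i ≤ M)
    (hMm : M < m)
    (a : ℝ)
    (ha_mem :
      (∃ i, i < m ∧ a = (T i - T m) / (Real.exp (k * t i) - Real.exp (k * t m))) ∨
      (∃ j, M < j ∧ a = (T j - T M) / (Real.exp (k * t j) - Real.exp (k * t M))))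
    (ha_min :
      (∀ i, i < m → a ≤ (T i - T m) / (Real.exp (k * t i) - Real.exp (k * t m))) ∧
      (∀ j, M < j → a ≤ (T j - T M) / (Real.exp (k * t j) - Real.exp (k * t M))))
    (bm bM : ℝ)
    (hbm : bm = T m - a * Real.exp (k * t m))
    (hbM : bM = T M - a * Real.exp (k * t M)) :
    ‖T - (fun i => a * Real.exp (k * t i) + (bm + bM) / 2)‖ <
      ‖T - (fun _ => (T M + T m) / 2)‖ := by
  subst hbm hbM
  have htMm : t M < t m := ht hMm
  have hexp : Real.exp (k * t m) < Real.exp (k * t M) := by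
    apply Real.exp_lt_exp.mpr; nlinarith
  have hTmM : T m < T M := by
    rcases lt_or_eq_of_le (hm_min M) with h | h
    · exact h
    · exact absurd (hm_first M h.symm) (not_le.mpr hMm)
  have ha_pos : 0 < a := by
    rcases ha_mem with ⟨i, him, hai⟩ | ⟨j, hjM, haj⟩
    · have h1 : t i < t m := ht him
      have hd : Real.exp (k * t m) < Real.exp (k * t i) := by
        apply Real.exp_lt_exp.mpr; nlinarith
      have hn : T m < T i := by
        rcases lt_or_eq_of_le (hm_min i) with h | h
        · exact h
        · exact absurd (hm_first i h.symm) (not_le.mpr him)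
      rw [hai]; apply div_pos <;> linarith
    · have h1 : t M < t j := ht hjM
      have hd : Real.exp (k * t j) < Real.exp (k * t M) := by
        apply Real.exp_lt_exp.mpr; nlinarith
      have hn : T j < T M := by
        rcases lt_or_eq_of_le (hM_max j) with h | h
        · exact h
        · exact absurd (hM_last j h) (not_le.mpr hjM)
      rw [haj, div_pos_iff]
      right; constructor <;> linarith
  have hr_lo : ∀ i, T m - a * Real.exp (k * t m) ≤ T i - a * Real.exp (k * t i) := by
    intro i
    rcases lt_or_ge i m with h | h
    · have h1 : t i < t m := ht h
      have hd : Real.exp (k * t m) < Real.exp (k * t i) := by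
        apply Real.exp_lt_exp.mpr; nlinarith
      have h2 := ha_min.1 i h
      rw [le_div_iff₀ (by linarith)] at h2
      linarith
    · have h1 : t m ≤ t i := ht.le_iff_le.mpr h
      have hd : Real.exp (k * t i) ≤ Real.exp (k * t m) := by
        apply Real.exp_le_exp.mpr; nlinarith
      have h2 := hm_min i
      nlinarith
  have hr_hi : ∀ i, T i - a * Real.exp (k * t i) ≤ T M - a * Real.exp (k * t M) := by
    intro i
    rcases lt_or_ge M i with h | h
    · have h1 : t M < t i := ht h
      have hd : Real.exp (k * t i) < Real.exp (k * t M) := by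
        apply Real.exp_lt_exp.mpr; nlinarith
      have h2 := ha_min.2 i h
      rw [le_div_iff_of_neg (by linarith)] at h2
      linarith
    · have h1 : t i ≤ t M := ht.le_iff_le.mpr h
      have hd : Real.exp (k * t M) ≤ Real.exp (k * t i) := by
        apply Real.exp_le_exp.mpr; nlinarith
      have h2 := hM_max i
      nlinarith
  set E1 := Real.exp (k * t M) with hE1
  set E2 := Real.exp (k * t m) with hE2
  have hD0 : 0 ≤ ((T M - a * E1) - (T m - a * E2)) / 2 := by
    have := hr_hi m; linarith
  have hbound :
      ‖T - (fun i => a * Real.exp (k * t i) +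
        ((T m - a * E2) + (T M - a * E1)) / 2)‖ ≤
        ((T M - a * E1) - (T m - a * E2)) / 2 := by
    rw [pi_norm_le_iff_of_nonneg hD0]
    intro i
    simp only [Pi.sub_apply]
    rw [Real.norm_eq_abs, abs_le]
    have h1 := hr_lo i
    have h2 := hr_hi i
    constructor <;> linarith
  have hlow : (T M - T m) / 2 ≤ ‖T - (fun _ => (T M + T m) / 2)‖ := by
    have h := norm_le_pi_norm (T - (fun _ => (T M + T m) / 2)) M
    simp only [Pi.sub_apply, Real.norm_eq_abs] at h
    rw [abs_of_nonneg (by linarith)] at h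
    linarith
  have hstrict : ((T M - a * E1) - (T m - a * E2)) / 2 < (T M - T m) / 2 := by
    nlinarith
  linarith
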